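/- For every δ ∈ (0,1) and every function F : {0,1}^n → {0,1}^m, there exists a Santha-Vazirani source X with bias δ such that the min-entropy of F(X) is at most m · log₂(2/(1+δ)). In other words, no non-trivial deterministic min-entropy condenser exists for SV_δ sources. -/
import Mathlib


open Finset

/-- `μ` is a probability distribution on the finite type `A`. -/
def IsDist {A : Type*} [Fintype A] (μ : A → ℝ) : Prop :=
  (∀ a, 0 ≤ μ a) ∧ ∑ a, μ a = 1

open Classical in
/-- Probability of an event under a distribution on a finite type. -/
noncomputable def Pr {A : Type*} [Fintype A] (μ : A → ℝ) (p : A → Prop) : ℝ :=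
  ∑ a, if p a then μ a else 0

/-- `μ` is a Santha-Vazirani distribution with bias `δ`: for every bit `i` and every
prefix `z` of positive probability, `P[Xᵢ = 1 | prefix] ∈ [(1−δ)/2, (1+δ)/2]`. -/
def IsSV {n : ℕ} (δ : ℝ) (μ : (Fin n → Bool) → ℝ) : Prop :=
  ∀ (i : Fin n) (z : Fin n → Bool),
    0 < Pr μ (fun x => ∀ j, j < i → x j = z j) →
      (1 - δ) / 2 * Pr μ (fun x => ∀ j, j < i → x j = z j)
          ≤ Pr μ (fun x => x i = true ∧ ∀ j, j < i → x j = z j) ∧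
        Pr μ (fun x => x i = true ∧ ∀ j, j < i → x j = z j)
          ≤ (1 + δ) / 2 * Pr μ (fun x => ∀ j, j < i → x j = z j)


open Real in
lemma rpow_concave_step {c u : ℝ} (hc0 : 0 ≤ c) (hc1 : c ≤ 1) (hu : 1 ≤ u) :
    (u + 1) ^ c + 1 ≤ u ^ c + 2 ^ c := by
  rcases eq_or_lt_of_le hu with rfl | hu
  · norm_num; linarith
  · have hcon := Real.concaveOn_rpow hc0 hc1
    have h1 : (0:ℝ) < u := by linarith
    have ha : (0:ℝ) ≤ 1/u := by positivity
    have hb : (0:ℝ) ≤ 1 - 1/u := by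
      have : 1/u ≤ 1 := by rw [div_le_one h1]; linarith
      linarith
    have hab : 1/u + (1 - 1/u) = 1 := by ring
    have hm1 : (1:ℝ) ∈ Set.Ici (0:ℝ) := by norm_num
    have hm2 : u + 1 ∈ Set.Ici (0:ℝ) := by simp; linarith
    have e1 := hcon.2 hm1 hm2 ha hb hab
    have e2 := hcon.2 hm1 hm2 hb ha (by ring)
    simp only [smul_eq_mul] at e1 e2
    have r1 : (1/u) * 1 + (1 - 1/u) * (u + 1) = u := by field_simp; ring
    have r2 : (1 - 1/u) * 1 + (1/u) * (u + 1) = 2 := by field_simp; ring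
    rw [r1] at e1
    rw [r2] at e2
    have h1c : (1:ℝ) ^ c = 1 := Real.one_rpow c
    rw [h1c] at e1 e2
    linarith

lemma key_ineq {c p x y : ℝ} (hc0 : 0 < c) (hc1 : c ≤ 1) (hp : ((1:ℝ)/2) ^ c = p)
    (hy : 0 ≤ y) (hxy : y ≤ x) :
    ((x + y)/2) ^ c ≤ p * x ^ c + (1 - p) * y ^ c := by
  have hx : 0 ≤ x := le_trans hy hxy
  have hp0 : 0 < p := hp ▸ Real.rpow_pos_of_pos (by norm_num) c
  have hp2c : p * 2 ^ c = 1 := by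
    rw [← hp, ← Real.mul_rpow (by norm_num) (by norm_num)]
    norm_num
  rcases eq_or_lt_of_le hy with rfl | hy0
  · rcases eq_or_lt_of_le hxy with rfl | hx0
    · simp [Real.zero_rpow hc0.ne']
    · have : ((x + 0)/2) ^ c = x ^ c * p := by
        rw [← hp, ← Real.mul_rpow hx (by norm_num)]
        ring_nf
      rw [this, Real.zero_rpow hc0.ne']
      ring_nf
      nlinarith [Real.rpow_nonneg hx c]
  · -- 0 < y ≤ x
    have hu : 1 ≤ x / y := (one_le_div hy0).2 hxy
    have step := rpow_concave_step hc0.le hc1 hu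
    have hyc : 0 < y ^ c := Real.rpow_pos_of_pos hy0 c
    have hmul : (x/y + 1) ^ c * y ^ c = (x + y) ^ c := by
      rw [← Real.mul_rpow (by positivity) hy0.le]
      congr 1
      field_simp
    have hmul2 : (x/y) ^ c * y ^ c = x ^ c := by
      rw [← Real.mul_rpow (by positivity) hy0.le]
      congr 1
      field_simp
    have hxy_c : (x + y) ^ c ≤ x ^ c + (2 ^ c - 1) * y ^ c := by
      have := mul_le_mul_of_nonneg_right step hyc.le
      rw [add_mul, hmul, one_mul, add_mul, hmul2] at this
      linarith
    have hhalf : ((x + y)/2) ^ c = (x + y) ^ c * p := by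
      rw [← hp, ← Real.mul_rpow (by positivity) (by norm_num)]
      ring_nf
    rw [hhalf]
    nlinarith [Real.rpow_nonneg (by positivity : (0:ℝ) ≤ x + y) c]

open Finset

def child {n : ℕ} (S : Finset (Fin (n+1) → Bool)) (b : Bool) : Finset (Fin n → Bool) :=
  Finset.univ.filter (fun y => Fin.cons b y ∈ S)

def bigbit {n : ℕ} (S : Finset (Fin (n+1) → Bool)) : Bool :=
  decide ((child S false).card ≤ (child S true).card)

noncomputable def gw (p : ℝ) : (n : ℕ) → Finset (Fin n → Bool) → (Fin n → Bool) → ℝ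
  | 0, _, _ => 1
  | n+1, S, x => (if x 0 = bigbit S then p else 1 - p) * gw p n (child S (x 0)) (Fin.tail x)

lemma sum_cons_eq {n : ℕ} (f : (Fin (n+1) → Bool) → ℝ) :
    ∑ x, f x = ∑ b, ∑ y, f (Fin.cons b y) := by
  rw [← (Fintype.sum_equiv (Fin.consEquiv (fun _ => Bool)) (fun q => f (Fin.cons q.1 q.2)) f (fun q => rfl)), Fintype.sum_prod_type]

lemma gw_cons {p : ℝ} {n : ℕ} (S : Finset (Fin (n+1) → Bool)) (b : Bool) (y : Fin n → Bool) :
    gw p (n+1) S (Fin.cons b y)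
      = (if b = bigbit S then p else 1 - p) * gw p n (child S b) y := by
  simp [gw, Fin.tail_cons]

lemma gw_nonneg {p : ℝ} (hp0 : 0 ≤ p) (hp1 : p ≤ 1) :
    ∀ n (S : Finset (Fin n → Bool)) (x : Fin n → Bool), 0 ≤ gw p n S x := by
  intro n
  induction n with
  | zero => intro S x; simp [gw]
  | succ n ih =>
    intro S x
    simp only [gw]
    apply mul_nonneg _ (ih _ _)
    split <;> linarith

lemma gw_sum {p : ℝ} : ∀ n (S : Finset (Fin n → Bool)), ∑ x, gw p n S x = 1 := by
  intro n
  induction n with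
  | zero =>
    intro S
    simp [gw]
  | succ n ih =>
    intro S
    rw [sum_cons_eq]
    simp only [gw_cons]
    rw [Fintype.sum_bool]
    rw [← Finset.mul_sum, ← Finset.mul_sum, ih, ih]
    cases h : bigbit S <;> simp

lemma Pr_nonneg {A : Type*} [Fintype A] {μ : A → ℝ} (h : ∀ a, 0 ≤ μ a) (P : A → Prop) :
    0 ≤ Pr μ P := by
  apply Finset.sum_nonneg
  intro a _
  split
  · exact h a
  · exact le_refl 0

lemma Pr_congr {A : Type*} [Fintype A] (μ : A → ℝ) {P Q : A → Prop} (h : ∀ a, P a ↔ Q a) :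
    Pr μ P = Pr μ Q := by
  classical
  unfold Pr
  apply Finset.sum_congr rfl
  intro a _
  exact if_congr (h a) rfl rfl

lemma Pr_true {A : Type*} [Fintype A] (μ : A → ℝ) {P : A → Prop} (h : ∀ a, P a) :
    Pr μ P = ∑ a, μ a := by
  unfold Pr
  apply Finset.sum_congr rfl
  intro a _
  simp [h a]

lemma Pr_false {A : Type*} [Fintype A] (μ : A → ℝ) {P : A → Prop} (h : ∀ a, ¬ P a) :
    Pr μ P = 0 := by
  unfold Pr
  apply Finset.sum_eq_zero
  intro a _
  simp [h a]

lemma Pr_gw_cons {p : ℝ} {n : ℕ} (S : Finset (Fin (n+1) → Bool)) (P : (Fin (n+1) → Bool) → Prop) :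
    Pr (gw p (n+1) S) P
      = ∑ b, (if b = bigbit S then p else 1 - p)
          * Pr (gw p n (child S b)) (fun y => P (Fin.cons b y)) := by
  classical
  unfold Pr
  rw [sum_cons_eq]
  apply Finset.sum_congr rfl
  intro b _
  rw [Finset.mul_sum]
  apply Finset.sum_congr rfl
  intro y _
  rw [gw_cons]
  split <;> simp

lemma card_child {n : ℕ} (S : Finset (Fin (n+1) → Bool)) :
    S.card = (child S true).card + (child S false).card := by
  classical
  have h : ∀ b, (child S b).card = (S.filter (fun x => x 0 = b)).card := by
    intro b
    apply Finset.card_bij (fun (y : Fin n → Bool) _ => (Fin.cons b y : Fin (n+1) → Bool))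
    · intro y hy
      simp only [child, Finset.mem_filter, Finset.mem_univ, true_and] at hy
      simp [hy]
    · intro y1 h1 y2 h2 h
      have := congrArg Fin.tail h
      simpa [Fin.tail_cons] using this
    · intro x hx
      simp only [Finset.mem_filter] at hx
      refine ⟨Fin.tail x, ?_, ?_⟩
      · simp only [child, Finset.mem_filter, Finset.mem_univ, true_and]
        rw [← hx.2, Fin.cons_self_tail]
        exact hx.1
      · rw [← hx.2, Fin.cons_self_tail]
  rw [h true, h false]
  rw [← Finset.card_filter_add_card_filter_not (p := fun x => x 0 = true)]
  congr 1
  · congr 1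
    ext x
    simp

lemma gw_bound {c p : ℝ} (hc0 : 0 < c) (hc1 : c ≤ 1) (hp : ((1:ℝ)/2) ^ c = p) :
    ∀ n (S : Finset (Fin n → Bool)),
      ((S.card : ℝ) / 2 ^ n) ^ c ≤ Pr (gw p n S) (fun x => x ∈ S) := by
  have hp0 : 0 < p := hp ▸ Real.rpow_pos_of_pos (by norm_num) c
  have hp1 : p ≤ 1 := hp ▸ Real.rpow_le_one (by norm_num) (by norm_num) hc0.le
  intro n
  induction n with
  | zero =>
    intro S
    rcases S.eq_empty_or_nonempty with rfl | ⟨y, hy⟩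
    · rw [Pr_false]
      · simp [Real.zero_rpow hc0.ne']
      · simp
    · have hall : ∀ x : Fin 0 → Bool, x ∈ S := by
        intro x
        rwa [Subsingleton.elim x y]
      rw [Pr_true _ hall, gw_sum]
      have hcard : S = Finset.univ := Finset.eq_univ_iff_forall.2 hall
      rw [hcard]
      simp [Real.one_rpow]
  | succ n ih =>
    intro S
    rw [Pr_gw_cons, Fintype.sum_bool]
    have hev : ∀ b, Pr (gw p n (child S b)) (fun y => Fin.cons b y ∈ S)
        = Pr (gw p n (child S b)) (fun y => y ∈ child S b) := by
      intro b
      apply Pr_congr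
      intro y
      simp [child]
    rw [hev true, hev false]
    set A := (child S true) with hA
    set B := (child S false) with hB
    have hcard : (S.card : ℝ) = A.card + B.card := by
      rw [card_child S]; push_cast; ring
    have h2n : (0:ℝ) < 2 ^ n := by positivity
    have key : ∀ {x y : ℝ}, 0 ≤ y → y ≤ x →
        ((x + y) / 2) ^ c ≤ p * x ^ c + (1 - p) * y ^ c :=
      fun hy hxy => key_ineq hc0 hc1 hp hy hxy
    have hprA := ih A
    have hprB := ih B
    have hdiv : ((S.card : ℝ) / 2 ^ (n+1))
        = (((A.card : ℝ) / 2 ^ n) + ((B.card : ℝ) / 2 ^ n)) / 2 := by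
      rw [hcard, pow_succ]; ring
    have hPrA : 0 ≤ Pr (gw p n A) fun x => x ∈ A :=
      Pr_nonneg (gw_nonneg hp0.le hp1 n A) _
    have hPrB : 0 ≤ Pr (gw p n B) fun x => x ∈ B :=
      Pr_nonneg (gw_nonneg hp0.le hp1 n B) _
    cases hbig : bigbit S with
    | true =>
      have hle : (B.card : ℝ) ≤ A.card := by
        exact_mod_cast of_decide_eq_true hbig
      have h2 : ¬ (false = true) := by simp
      simp only [hbig]
      rw [if_pos trivial, if_neg h2]
      have hkey := key (x := (A.card : ℝ) / 2 ^ n) (y := (B.card : ℝ) / 2 ^ n)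
        (by positivity) (by apply div_le_div_of_nonneg_right hle (by positivity))
      rw [hdiv]
      calc (((A.card : ℝ) / 2 ^ n + (B.card : ℝ) / 2 ^ n) / 2) ^ c
          ≤ p * ((A.card : ℝ) / 2 ^ n) ^ c + (1 - p) * ((B.card : ℝ) / 2 ^ n) ^ c := hkey
        _ ≤ p * (Pr (gw p n A) fun x => x ∈ A) + (1 - p) * (Pr (gw p n B) fun x => x ∈ B) := by
            apply add_le_add
            · exact mul_le_mul_of_nonneg_left hprA hp0.le
            · exact mul_le_mul_of_nonneg_left hprB (by linarith)
    | false =>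
      have hle : (A.card : ℝ) ≤ B.card := by
        have := of_decide_eq_false hbig
        have := lt_of_not_ge this
        exact_mod_cast this.le
      have h2 : ¬ (true = false) := by simp
      simp only [hbig]
      rw [if_pos trivial]
      have hkey := key (x := (B.card : ℝ) / 2 ^ n) (y := (A.card : ℝ) / 2 ^ n)
        (by positivity) (by apply div_le_div_of_nonneg_right hle (by positivity))
      rw [hdiv]
      calc (((A.card : ℝ) / 2 ^ n + (B.card : ℝ) / 2 ^ n) / 2) ^ c
          = (((B.card : ℝ) / 2 ^ n + (A.card : ℝ) / 2 ^ n) / 2) ^ c := by ring_nf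
        _ ≤ p * ((B.card : ℝ) / 2 ^ n) ^ c + (1 - p) * ((A.card : ℝ) / 2 ^ n) ^ c := hkey
        _ ≤ p * (Pr (gw p n B) fun x => x ∈ B) + (1 - p) * (Pr (gw p n A) fun x => x ∈ A) := by
            apply add_le_add
            · exact mul_le_mul_of_nonneg_left hprB hp0.le
            · exact mul_le_mul_of_nonneg_left hprA (by linarith)
        _ = (1 - p) * (Pr (gw p n A) fun x => x ∈ A) + p * (Pr (gw p n B) fun x => x ∈ B) := by
            ring

lemma gw_cond {p : ℝ} :
    ∀ n (S : Finset (Fin n → Bool)) (i : Fin n) (z : Fin n → Bool),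
      ∃ w, (w = p ∨ w = 1 - p) ∧
        Pr (gw p n S) (fun x => x i = true ∧ ∀ j, j < i → x j = z j)
          = w * Pr (gw p n S) (fun x => ∀ j, j < i → x j = z j) := by
  intro n
  induction n with
  | zero => intro S i z; exact i.elim0
  | succ n ih =>
    intro S i z
    induction i using Fin.cases with
    | zero =>
      refine ⟨if true = bigbit S then p else 1 - p,
        by by_cases h : true = bigbit S <;> simp [h], ?_⟩
      have hden : Pr (gw p (n+1) S) (fun x => ∀ j, j < (0 : Fin (n+1)) → x j = z j) = 1 := by
        rw [Pr_true _ (fun x j hj => absurd hj (Fin.not_lt_zero j)), gw_sum]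
      rw [hden, mul_one]
      simp only [Pr_gw_cons, Fintype.sum_bool]
      have h1 : Pr (gw p n (child S true)) (fun y =>
          (Fin.cons true y : Fin (n+1) → Bool) 0 = true ∧
            ∀ j, j < (0:Fin (n+1)) → (Fin.cons true y : Fin (n+1) → Bool) j = z j) = 1 := by
        rw [Pr_true, gw_sum]
        intro y
        exact ⟨by simp, fun j hj => absurd hj (Fin.not_lt_zero j)⟩
      have h0 : Pr (gw p n (child S false)) (fun y =>
          (Fin.cons false y : Fin (n+1) → Bool) 0 = true ∧
            ∀ j, j < (0:Fin (n+1)) → (Fin.cons false y : Fin (n+1) → Bool) j = z j) = 0 := by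
        apply Pr_false
        intro y hy
        simpa using hy.1
      rw [h1, h0, mul_one, mul_zero, add_zero]
    | succ i' =>
      obtain ⟨w, hw, hrec⟩ := ih (child S (z 0)) i' (Fin.tail z)
      refine ⟨w, hw, ?_⟩
      have hiff : ∀ (b : Bool) (y : Fin n → Bool),
          (∀ j, j < Fin.succ i' → (Fin.cons b y : Fin (n+1) → Bool) j = z j) ↔
            (b = z 0 ∧ ∀ j, j < i' → y j = Fin.tail z j) := by
        intro b y
        constructor
        · intro h
          refine ⟨by simpa using h 0 (Fin.succ_pos i'), ?_⟩
          intro j hj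
          have := h j.succ (by rwa [Fin.succ_lt_succ_iff])
          simpa [Fin.tail] using this
        · rintro ⟨h0, h1⟩ j
          induction j using Fin.cases with
          | zero => intro _; simpa using h0
          | succ j' =>
            intro hj'
            have := h1 j' (by rwa [← Fin.succ_lt_succ_iff])
            simpa [Fin.tail] using this
      have hden : ∀ b : Bool, Pr (gw p n (child S b))
          (fun y => ∀ j, j < Fin.succ i' → (Fin.cons b y : Fin (n+1) → Bool) j = z j)
          = if b = z 0 then Pr (gw p n (child S b))
              (fun y => ∀ j, j < i' → y j = Fin.tail z j) else 0 := by
        intro b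
        by_cases hb : b = z 0
        · rw [if_pos hb]
          apply Pr_congr
          intro y
          rw [hiff]
          simp [hb]
        · rw [if_neg hb]
          apply Pr_false
          intro y hy
          exact hb ((hiff b y).1 hy).1
      have hnum : ∀ b : Bool, Pr (gw p n (child S b))
          (fun y => (Fin.cons b y : Fin (n+1) → Bool) (Fin.succ i') = true ∧
            ∀ j, j < Fin.succ i' → (Fin.cons b y : Fin (n+1) → Bool) j = z j)
          = if b = z 0 then Pr (gw p n (child S b))
              (fun y => y i' = true ∧ ∀ j, j < i' → y j = Fin.tail z j) else 0 := by
        intro b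
        by_cases hb : b = z 0
        · rw [if_pos hb]
          apply Pr_congr
          intro y
          rw [Fin.cons_succ, and_congr_right_iff]
          intro _
          rw [hiff]
          simp [hb]
        · rw [if_neg hb]
          apply Pr_false
          intro y hy
          exact hb ((hiff b y).1 hy.2).1
      simp only [Pr_gw_cons, Fintype.sum_bool]
      rw [hnum true, hnum false, hden true, hden false]
      cases hz : z 0 with
      | true =>
        simp only [if_pos rfl, hz, if_neg (by simp : ¬(false = true)), mul_zero, add_zero]
        rw [hz] at hrec
        rw [hrec]
        simp only [if_pos trivial]
        ring
      | false =>
        simp only [hz, if_neg (by simp : ¬(true = false)), if_pos rfl, mul_zero, zero_add]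
        rw [hz] at hrec
        rw [hrec]
        simp only [if_pos trivial]
        ring

/-- No non-trivial deterministic min-entropy condenser for SV_δ sources:
for every `F : {0,1}^n → {0,1}^m` there is an SV source `X` with bias `δ` such that
some output value `s` has `P[F(X) = s] ≥ ((1+δ)/2)^m`, i.e. the min-entropy of `F(X)`
is at most `m·log₂(2/(1+δ))`. -/
theorem no_sv_condenser {n m : ℕ} (δ : ℝ) (hδ0 : 0 < δ) (hδ1 : δ < 1)
    (F : (Fin n → Bool) → (Fin m → Bool)) :
    ∃ μ : (Fin n → Bool) → ℝ, IsDist μ ∧ IsSV δ μ ∧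
      ∃ s : Fin m → Bool, ((1 + δ) / 2) ^ m ≤ Pr μ (fun x => F x = s) := by
  classical
  set p : ℝ := (1 + δ) / 2 with hpdef
  have hp0 : 0 < p := by rw [hpdef]; linarith
  have hphalf : 1/2 < p := by rw [hpdef]; linarith
  have hp1 : p < 1 := by rw [hpdef]; linarith
  set c : ℝ := Real.logb (1/2) p with hcdef
  have hpc : ((1:ℝ)/2) ^ c = p :=
    Real.rpow_logb (by norm_num) (by norm_num) hp0
  have hlog2 : Real.log (1/2) < 0 := Real.log_neg (by norm_num) (by norm_num)
  have hlogp : Real.log p < 0 := Real.log_neg hp0 hp1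
  have hlogle : Real.log (1/2) ≤ Real.log p := Real.log_le_log (by norm_num) hphalf.le
  have hc0 : 0 < c := by
    rw [hcdef, Real.logb]
    exact div_pos_iff.2 (Or.inr ⟨hlogp, hlog2⟩)
  have hc1 : c ≤ 1 := by
    rw [hcdef, Real.logb, div_le_iff_of_neg hlog2]
    linarith
  -- pigeonhole: a large fiber
  have hcard : ∑ s : Fin m → Bool, (Finset.univ.filter (fun x => F x = s)).card
      = Fintype.card (Fin n → Bool) := by
    rw [← Finset.card_univ]
    exact (Finset.card_eq_sum_card_fiberwise (fun x _ => Finset.mem_univ (F x))).symm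
  have hcfn : Fintype.card (Fin n → Bool) = 2 ^ n := by simp
  have hcfm : Fintype.card (Fin m → Bool) = 2 ^ m := by simp
  obtain ⟨s, -, hs⟩ := Finset.exists_le_of_sum_le
    (Finset.univ_nonempty : (Finset.univ : Finset (Fin m → Bool)).Nonempty)
    (show ∑ _s : Fin m → Bool, 2 ^ n
        ≤ ∑ s : Fin m → Bool, 2 ^ m * (Finset.univ.filter (fun x => F x = s)).card by
      rw [Finset.sum_const, ← Finset.mul_sum, hcard, hcfn, Finset.card_univ, hcfm,
        smul_eq_mul])
  set T : Finset (Fin n → Bool) := Finset.univ.filter (fun x => F x = s) with hT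
  refine ⟨gw p n T, ⟨gw_nonneg hp0.le hp1.le n T, gw_sum n T⟩, ?_, s, ?_⟩
  · -- IsSV
    intro i z hpos
    obtain ⟨w, hw, heq⟩ := gw_cond (p := p) n T i z
    have hD : 0 ≤ Pr (gw p n T) (fun x => ∀ j, j < i → x j = z j) := hpos.le
    have hwl : 1 - p ≤ w := by rcases hw with rfl | rfl <;> [linarith; linarith]
    have hwu : w ≤ p := by rcases hw with rfl | rfl <;> [linarith; linarith]
    constructor
    · rw [heq]
      have : (1 - δ) / 2 = 1 - p := by rw [hpdef]; ring
      rw [this]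
      exact mul_le_mul_of_nonneg_right hwl hD
    · rw [heq]
      exact mul_le_mul_of_nonneg_right hwu hD
  · -- probability bound
    have hbound := gw_bound hc0 hc1 hpc n T
    have hev : Pr (gw p n T) (fun x => F x = s) = Pr (gw p n T) (fun x => x ∈ T) := by
      apply Pr_congr
      intro x
      simp [hT]
    rw [hev]
    refine le_trans ?_ hbound
    have hcast : ((2:ℝ))^n ≤ 2^m * (T.card : ℝ) := by exact_mod_cast hs
    have hfrac : ((1:ℝ)/2)^m ≤ (T.card : ℝ) / 2^n := by
      rw [div_pow, one_pow, div_le_div_iff₀ (by positivity) (by positivity)]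
      linarith
    have key2 : ((((1:ℝ)/2) ^ m) : ℝ) ^ c = p ^ m := by
      rw [← Real.rpow_natCast ((1:ℝ)/2) m, ← Real.rpow_mul (by norm_num), mul_comm,
        Real.rpow_mul (by norm_num), hpc, Real.rpow_natCast]
    calc ((1 + δ) / 2) ^ m = p ^ m := by rw [hpdef]
      _ = ((((1:ℝ)/2) ^ m) : ℝ) ^ c := key2.symm
      _ ≤ ((T.card : ℝ) / 2 ^ n) ^ c :=
          Real.rpow_le_rpow (by positivity) hfrac hc0.le
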